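/- Let T be a weighted binary tree and x a non-root node of T with parent y = π(x), and write c', d', e' for the roots (when present) of the three subtrees that are reattached by the rotation performed when bumping x (in the right-rotation case, c' and d' are the children of x and e' is the sibling of x). Then for every non-root node z of T other than the (at most five) nodes x, y, c', d', e', the merit is unchanged: μ(z, T^x) = μ(z, T). -/

import Mathlib

/-- Binary trees storing a value (e.g. a weight) at every internal node. -/
inductive BTree (α : Type) where
  | leaf : BTree α
  | node : BTree α → α → BTree α → BTree α

namespace BTree

/-- The subtree of `t` rooted at the node addressed by the path `p`
(`false` = go left, `true` = go right); `none` if no such node. -/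
def subtreeAt {α : Type} : BTree α → List Bool → Option (BTree α)
  | t, [] => some t
  | leaf, _ :: _ => none
  | node l _ _, false :: p => subtreeAt l p
  | node _ _ r, true :: p => subtreeAt r p

/-- The value stored at the node of `t` addressed by `p`, if it exists. -/
def weightAt {α : Type} (t : BTree α) (p : List Bool) : Option α :=
  match subtreeAt t p with
  | some (node _ v _) => some v
  | _ => none

/-- The sum of all weights in the tree. -/
def totalWeight : BTree ℝ → ℝ
  | leaf => 0
  | node l v r => totalWeight l + v + totalWeight r

/-- `p̄(x)`: the aggregated weight of the subtree rooted at the node addressed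
by `p`, with value `0` for an absent node. -/
def subWeight (t : BTree ℝ) (p : List Bool) : ℝ :=
  match subtreeAt t p with
  | some s => totalWeight s
  | none => 0

/-- The weight of the node addressed by `p`, with default `0` for an absent node. -/
def weightD (t : BTree ℝ) (p : List Bool) : ℝ :=
  (weightAt t p).getD 0

/-- The depth of a node addressed by the path `p` (the root has depth 1). -/
def depth (p : List Bool) : ℕ := p.length + 1

/-- `c(T) = Σ_{x ∈ T} d(x) p(x)`, where the root has depth 1. -/
def cost : BTree ℝ → ℝ
  | leaf => 0
  | node l v r => (totalWeight l + v + totalWeight r) + cost l + cost r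

/-- A tree is weighted if its weights are nonnegative and sum to 1. -/
def Weighted (t : BTree ℝ) : Prop :=
  totalWeight t = 1 ∧ ∀ p w, weightAt t p = some w → (0 : ℝ) ≤ w

/-- Right rotation at the node addressed by `q`: replaces the subtree
`a(b(c,d),e)` rooted there by `b(c,a(d,e))`; `none` if the node addressed by
`q` does not exist or has no left child. -/
def rotateRightAt {α : Type} : BTree α → List Bool → Option (BTree α)
  | node (node c pb d) pa e, [] => some (node c pb (node d pa e))
  | node l v r, false :: p => (rotateRightAt l p).map (fun l' => node l' v r)
  | node l v r, true :: p => (rotateRightAt r p).map (fun r' => node l v r')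
  | _, _ => none

/-- Left rotation at the node addressed by `q`: replaces the subtree
`b(c,a(d,e))` rooted there by `a(b(c,d),e)`; `none` if the node addressed by
`q` does not exist or has no right child. -/
def rotateLeftAt {α : Type} : BTree α → List Bool → Option (BTree α)
  | node c pb (node d pa e), [] => some (node (node c pb d) pa e)
  | node l v r, false :: p => (rotateLeftAt l p).map (fun l' => node l' v r)
  | node l v r, true :: p => (rotateLeftAt r p).map (fun r' => node l v r')
  | _, _ => none

/-- `T^x`: bumping the (non-root) node `x` addressed by `p`, i.e. right
rotation at `π(x)` if `x` is a left child and left rotation at `π(x)` if `x`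
is a right child.  Returns `none` iff `p` does not address a non-root node. -/
def bump {α : Type} (t : BTree α) : List Bool → Option (BTree α)
  | [] => none
  | p => if p.getLastD false then rotateLeftAt t p.dropLast
         else rotateRightAt t p.dropLast

/-- The merit `μ(x,T) = p(x) + p̄(λ(x)) − p(π(x)) − p̄(σ(x))` of bumping the
node `x` addressed by `q ++ [dir]` whose parent `π(x)` is addressed by `q`;
`λ(x)` is the like-minded child of `x` and `σ(x)` the sibling of `x`. -/
def merit (t : BTree ℝ) (q : List Bool) (dir : Bool) : ℝ :=
  weightD t (q ++ [dir]) + subWeight t (q ++ [dir, dir])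
    - weightD t q - subWeight t (q ++ [!dir])

/-- The merit of bumping the node addressed by the (nonempty) path `p`. -/
def meritAt (t : BTree ℝ) (p : List Bool) : ℝ :=
  merit t p.dropLast (p.getLastD false)

open Classical in
/-- `β(T)`, the result of bumping `T`: `{T}` if no non-root node has positive
merit, and otherwise the set of all `T^x` for `x` a non-root node of maximal
merit. -/
noncomputable def beta (t : BTree ℝ) : Set (BTree ℝ) :=
  if ∃ p, p ≠ [] ∧ (weightAt t p).isSome ∧ 0 < meritAt t p then
    {t' | ∃ p, p ≠ [] ∧ (weightAt t p).isSome ∧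
      (∀ q, q ≠ [] → (weightAt t q).isSome → meritAt t q ≤ meritAt t p) ∧
      bump t p = some t'}
  else {t}

/-- `β^k(T)`: iterated bumping, `β^0(T) = {T}` and
`β^k(T) = ⋃_{t ∈ β^{k−1}(T)} β(t)`. -/
noncomputable def betaIter (t : BTree ℝ) : ℕ → Set (BTree ℝ)
  | 0 => {t}
  | k + 1 => ⋃ s ∈ betaIter t k, beta s

/-- The number of nodes of a binary tree. -/
def size {α : Type} : BTree α → ℕ
  | leaf => 0
  | node l _ r => size l + 1 + size r

/-- The in-order traversal of a binary tree. -/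
def inorder {α : Type} : BTree α → List α
  | leaf => []
  | node l v r => inorder l ++ v :: inorder r

end BTree

namespace BTree

theorem getLastD_append' (u s : List Bool) (hs : s ≠ []) (b : Bool) :
    (u ++ s).getLastD b = s.getLastD b := by
  cases s with
  | nil => simp at hs
  | cons x xs =>
    have : (x::xs).getLast? = some ((x::xs).getLast (by simp)) := List.getLast?_eq_getLast _
    simp [List.getLastD_eq_getLast?, this]

theorem dropLast_concat_getLastD (l : List Bool) (h : l ≠ []) :
    l.dropLast ++ [l.getLastD false] = l := by
  rw [List.getLastD_eq_getLast?, List.getLast?_eq_getLast h]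
  simp [List.dropLast_append_getLast]

/-- Replace the subtree at path `q` (no-op below a leaf). -/
def replaceAt {α : Type} : BTree α → List Bool → BTree α → BTree α
  | _, [], s => s
  | leaf, _ :: _, _ => leaf
  | node l v r, false :: p, s => node (replaceAt l p s) v r
  | node l v r, true :: p, s => node l v (replaceAt r p s)

theorem subtreeAt_append {α : Type} (t : BTree α) (u v : List Bool) :
    subtreeAt t (u ++ v) = (subtreeAt t u).bind (fun s => subtreeAt s v) := by
  induction u generalizing t with
  | nil => simp [subtreeAt]
  | cons a u ih =>
    cases t with
    | leaf => simp [subtreeAt]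
    | node l w r => cases a <;> simp [subtreeAt, ih]

theorem subtreeAt_replaceAt {α : Type} (t : BTree α) (q : List Bool) (u u' : BTree α)
    (h : subtreeAt t q = some u) (v : List Bool) :
    subtreeAt (replaceAt t q u') (q ++ v) = subtreeAt u' v := by
  induction q generalizing t with
  | nil => simp [subtreeAt, replaceAt]
  | cons a q ih =>
    cases t with
    | leaf => simp [subtreeAt] at h
    | node l w r => cases a <;> simp_all [subtreeAt, replaceAt]

theorem weightAt_replaceAt {α : Type} (t : BTree α) (q : List Bool) (u u' : BTree α)
    (h : subtreeAt t q = some u) (r : List Bool) (hr : ¬ q <+: r) :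
    weightAt (replaceAt t q u') r = weightAt t r := by
  induction q generalizing t r with
  | nil => exact absurd (List.nil_prefix) hr
  | cons a q ih =>
    cases t with
    | leaf => simp [subtreeAt] at h
    | node l w rr =>
      cases r with
      | nil => cases a <;> rfl
      | cons b r =>
        cases a <;> cases b
        · exact ih l (by simpa [subtreeAt] using h) r
            (fun hh => hr (by simpa [List.cons_prefix_cons] using hh))
        · rfl
        · rfl
        · exact ih rr (by simpa [subtreeAt] using h) r
            (fun hh => hr (by simpa [List.cons_prefix_cons] using hh))

theorem totalWeight_replaceAt (t : BTree ℝ) (q : List Bool) (u u' : BTree ℝ)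
    (h : subtreeAt t q = some u) :
    totalWeight (replaceAt t q u') = totalWeight t - totalWeight u + totalWeight u' := by
  induction q generalizing t with
  | nil =>
    simp only [subtreeAt, Option.some_inj] at h
    subst h; simp [replaceAt]
  | cons a q ih =>
    cases t with
    | leaf => simp [subtreeAt] at h
    | node l w rr =>
      cases a
      · have := ih l (by simpa [subtreeAt] using h)
        simp [replaceAt, totalWeight, this]; ring
      · have := ih rr (by simpa [subtreeAt] using h)
        simp [replaceAt, totalWeight, this]; ring

theorem subWeight_replaceAt (t : BTree ℝ) (q : List Bool) (u u' : BTree ℝ)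
    (h : subtreeAt t q = some u) (hw : totalWeight u' = totalWeight u)
    (r : List Bool) (hr : ¬ q <+: r) :
    subWeight (replaceAt t q u') r = subWeight t r := by
  induction q generalizing t r with
  | nil => exact absurd (List.nil_prefix) hr
  | cons a q ih =>
    cases t with
    | leaf => simp [subtreeAt] at h
    | node l w rr =>
      cases r with
      | nil =>
        cases a
        · have ht := totalWeight_replaceAt l q u u' (by simpa [subtreeAt] using h)
          show subWeight (node (replaceAt l q u') w rr) [] = subWeight (node l w rr) []
          simp only [subWeight, subtreeAt, totalWeight, ht, hw]
          ring
        · have ht := totalWeight_replaceAt rr q u u' (by simpa [subtreeAt] using h)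
          show subWeight (node l w (replaceAt rr q u')) [] = subWeight (node l w rr) []
          simp only [subWeight, subtreeAt, totalWeight, ht, hw]
          ring
      | cons b r =>
        cases a <;> cases b
        · exact ih l (by simpa [subtreeAt] using h) r
            (fun hh => hr (by simpa [List.cons_prefix_cons] using hh))
        · rfl
        · rfl
        · exact ih rr (by simpa [subtreeAt] using h) r
            (fun hh => hr (by simpa [List.cons_prefix_cons] using hh))

theorem subWeight_replaceAt_self (t : BTree ℝ) (q : List Bool) (u u' : BTree ℝ)
    (h : subtreeAt t q = some u) (hw : totalWeight u' = totalWeight u) :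
    subWeight (replaceAt t q u') q = subWeight t q := by
  have h1 := subtreeAt_replaceAt t q u u' h []
  simp only [List.append_nil, subtreeAt] at h1
  simp [subWeight, h1, h, hw]

theorem meritAt_replaceAt (t : BTree ℝ) (q : List Bool) (u u' : BTree ℝ)
    (h : subtreeAt t q = some u) (hw : totalWeight u' = totalWeight u)
    (p : List Bool) (hp : p ≠ []) (hq : ¬ q <+: p) :
    meritAt (replaceAt t q u') p = meritAt t p := by
  set l := p.getLastD false with hl
  have hpl : p.dropLast ++ [l] = p := dropLast_concat_getLastD p hp
  have hW : ∀ r, ¬ q <+: r → weightD (replaceAt t q u') r = weightD t r := by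
    intro r hr; unfold weightD; rw [weightAt_replaceAt t q u u' h r hr]
  have hS : ∀ r, ¬ q <+: r → subWeight (replaceAt t q u') r = subWeight t r :=
    fun r hr => subWeight_replaceAt t q u u' h hw r hr
  have hdl : ¬ q <+: p.dropLast := fun hh => hq (hh.trans (List.dropLast_prefix p))
  have hS2 : ∀ b, subWeight (replaceAt t q u') (p.dropLast ++ [b]) = subWeight t (p.dropLast ++ [b]) := by
    intro b
    by_cases hc : q <+: p.dropLast ++ [b]
    · rcases List.prefix_concat_iff.mp hc with hc | hc
      · rw [← hc]; exact subWeight_replaceAt_self t q u u' h hw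
      · exact absurd hc hdl
    · exact hS _ hc
  unfold meritAt merit
  rw [← hl, hpl]
  rw [hW p hq, hW p.dropLast hdl]
  have h1 : p.dropLast ++ [l, l] = p ++ [l] := by rw [← hpl]; simp
  rw [h1]
  have h2 : subWeight (replaceAt t q u') (p ++ [l]) = subWeight t (p ++ [l]) := by
    by_cases hc : q <+: p ++ [l]
    · rcases List.prefix_concat_iff.mp hc with hc | hc
      · rw [← hc]; exact subWeight_replaceAt_self t q u u' h hw
      · exact absurd hc hq
    · exact hS _ hc
  rw [h2]
  rw [hS2 (!l)]

theorem meritAt_congr (T' T : BTree ℝ) (u1 u2 : List Bool)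
    (h : subtreeAt T' u1 = subtreeAt T u2) (s : List Bool) (hs : s ≠ []) :
    meritAt T' (u1 ++ s) = meritAt T (u2 ++ s) := by
  have key : ∀ v, subtreeAt T' (u1 ++ v) = subtreeAt T (u2 ++ v) := by
    intro v; rw [subtreeAt_append, subtreeAt_append, h]
  have kW : ∀ v, weightD T' (u1 ++ v) = weightD T (u2 ++ v) := by
    intro v; unfold weightD weightAt; rw [key]
  have kS : ∀ v, subWeight T' (u1 ++ v) = subWeight T (u2 ++ v) := by
    intro v; unfold subWeight; rw [key]
  set l := s.getLastD false with hl
  have hsl : s.dropLast ++ [l] = s := dropLast_concat_getLastD s hs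
  unfold meritAt merit
  rw [List.dropLast_append_of_ne_nil hs, List.dropLast_append_of_ne_nil hs,
    getLastD_append' u1 s hs, getLastD_append' u2 s hs, ← hl]
  have e1 : ∀ u : List Bool, (u ++ s.dropLast) ++ [l] = u ++ (s.dropLast ++ [l]) := by simp
  have e2 : ∀ (u : List Bool) (b c : Bool), (u ++ s.dropLast) ++ [b, c] = u ++ (s.dropLast ++ [b, c]) := by simp
  have e3 : ∀ (u : List Bool) (b : Bool), (u ++ s.dropLast) ++ [b] = u ++ (s.dropLast ++ [b]) := by simp
  rw [e1, e2, e3, e3, hsl, kW s, kW s.dropLast, kS _, kS _]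
  simp [List.append_assoc]

theorem rotateRightAt_eq {α : Type} (t t' : BTree α) (q : List Bool)
    (h : rotateRightAt t q = some t') :
    ∃ c pb d pa e, subtreeAt t q = some (node (node c pb d) pa e) ∧
      t' = replaceAt t q (node c pb (node d pa e)) := by
  induction q generalizing t t' with
  | nil =>
    cases t with
    | leaf => simp [rotateRightAt] at h
    | node l v r =>
      cases l with
      | leaf => simp [rotateRightAt] at h
      | node c pb d =>
        simp only [rotateRightAt, Option.some_inj] at h
        exact ⟨c, pb, d, v, r, by simp [subtreeAt], by simp [replaceAt, ← h]⟩
  | cons a q ih =>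
    cases t with
    | leaf => simp [rotateRightAt] at h
    | node l v r =>
      cases a
      · simp only [rotateRightAt, Option.map_eq_some_iff] at h
        obtain ⟨l', hl, rfl⟩ := h
        obtain ⟨c, pb, d, pa, e, h1, h2⟩ := ih l l' hl
        exact ⟨c, pb, d, pa, e, by simpa [subtreeAt] using h1, by simp [replaceAt, h2]⟩
      · simp only [rotateRightAt, Option.map_eq_some_iff] at h
        obtain ⟨r', hr, rfl⟩ := h
        obtain ⟨c, pb, d, pa, e, h1, h2⟩ := ih r r' hr
        exact ⟨c, pb, d, pa, e, by simpa [subtreeAt] using h1, by simp [replaceAt, h2]⟩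

theorem rotateLeftAt_eq {α : Type} (t t' : BTree α) (q : List Bool)
    (h : rotateLeftAt t q = some t') :
    ∃ c pb d pa e, subtreeAt t q = some (node c pb (node d pa e)) ∧
      t' = replaceAt t q (node (node c pb d) pa e) := by
  induction q generalizing t t' with
  | nil =>
    cases t with
    | leaf => simp [rotateLeftAt] at h
    | node l v r =>
      cases r with
      | leaf => simp [rotateLeftAt] at h
      | node d pa e =>
        simp only [rotateLeftAt, Option.some_inj] at h
        exact ⟨l, v, d, pa, e, by simp [subtreeAt], by simp [replaceAt, ← h]⟩
  | cons a q ih =>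
    cases t with
    | leaf => simp [rotateLeftAt] at h
    | node l v r =>
      cases a
      · simp only [rotateLeftAt, Option.map_eq_some_iff] at h
        obtain ⟨l', hl, rfl⟩ := h
        obtain ⟨c, pb, d, pa, e, h1, h2⟩ := ih l l' hl
        exact ⟨c, pb, d, pa, e, by simpa [subtreeAt] using h1, by simp [replaceAt, h2]⟩
      · simp only [rotateLeftAt, Option.map_eq_some_iff] at h
        obtain ⟨r', hr, rfl⟩ := h
        obtain ⟨c, pb, d, pa, e, h1, h2⟩ := ih r r' hr
        exact ⟨c, pb, d, pa, e, by simpa [subtreeAt] using h1, by simp [replaceAt, h2]⟩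

end BTree

open BTree in
/-- Let `T` be a weighted binary tree and `x` the non-root
node addressed by `q ++ [dir]`, with parent `y = π(x)` addressed by `q`; let
`c'`, `d'`, `e'` be the roots (when present) of the three subtrees reattached
by the rotation performed when bumping `x` (addressed in `T^x` by
`q ++ [dir]`, `q ++ [!dir, dir]` and `q ++ [!dir, !dir]`, and in `T` by
`q ++ [dir, dir]`, `q ++ [dir, !dir]` and `q ++ [!dir]`).  Then for every
non-root node `z` of `T` other than the (at most five) nodes
`x, y, c', d', e'`, the merit is unchanged: `μ(z, T^x) = μ(z, T)`. -/
theorem merit_bump (T T' : BTree ℝ) (hT : T.Weighted)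
    (q : List Bool) (dir : Bool) (hbump : T.bump (q ++ [dir]) = some T') :
    -- non-root nodes outside the subtree rooted at `y` (this excludes `x`, `y`)
    (∀ p, p ≠ [] → ¬ q <+: p → meritAt T' p = meritAt T p) ∧
    -- nodes strictly inside the like-minded subtree `λ(x)` (this excludes `c'`)
    (∀ s, s ≠ [] → meritAt T' (q ++ [dir] ++ s) = meritAt T (q ++ [dir, dir] ++ s)) ∧
    -- nodes strictly inside the middle subtree (this excludes `d'`)
    (∀ s, s ≠ [] → meritAt T' (q ++ [!dir, dir] ++ s) = meritAt T (q ++ [dir, !dir] ++ s)) ∧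
    -- nodes strictly inside the sibling subtree `σ(x)` (this excludes `e'`)
    (∀ s, s ≠ [] → meritAt T' (q ++ [!dir, !dir] ++ s) = meritAt T (q ++ [!dir] ++ s)) := by
  have hb : (if dir then rotateLeftAt T q else rotateRightAt T q) = some T' := by
    cases hq : q ++ [dir] with
    | nil => simp at hq
    | cons a p =>
      rw [hq] at hbump
      rw [show bump T (a :: p)
            = if (a :: p).getLastD false then rotateLeftAt T (a :: p).dropLast
              else rotateRightAt T (a :: p).dropLast from rfl, ← hq,
        List.getLastD_concat, List.dropLast_concat] at hbump
      exact hbump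
  cases dir with
  | false =>
    rw [if_neg (by simp)] at hb
    obtain ⟨c, pb, d, pa, e, hsub, rfl⟩ := rotateRightAt_eq T T' q hb
    have hw : totalWeight (node c pb (node d pa e))
        = totalWeight (node (node c pb d) pa e) := by
      simp [totalWeight]; ring
    simp only [Bool.not_false, Bool.not_true]
    refine ⟨fun p hp hq' => meritAt_replaceAt T q _ _ hsub hw p hp hq', ?_, ?_, ?_⟩
    · intro s hs
      exact meritAt_congr _ T (q ++ [false]) (q ++ [false, false])
        (by rw [subtreeAt_replaceAt T q _ _ hsub, subtreeAt_append, hsub]; rfl) s hs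
    · intro s hs
      exact meritAt_congr _ T (q ++ [true, false]) (q ++ [false, true])
        (by rw [subtreeAt_replaceAt T q _ _ hsub, subtreeAt_append, hsub]; rfl) s hs
    · intro s hs
      exact meritAt_congr _ T (q ++ [true, true]) (q ++ [true])
        (by rw [subtreeAt_replaceAt T q _ _ hsub, subtreeAt_append, hsub]; rfl) s hs
  | true =>
    rw [if_pos rfl] at hb
    obtain ⟨c, pb, d, pa, e, hsub, rfl⟩ := rotateLeftAt_eq T T' q hb
    have hw : totalWeight (node (node c pb d) pa e)
        = totalWeight (node c pb (node d pa e)) := by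
      simp [totalWeight]; ring
    simp only [Bool.not_false, Bool.not_true]
    refine ⟨fun p hp hq' => meritAt_replaceAt T q _ _ hsub hw p hp hq', ?_, ?_, ?_⟩
    · intro s hs
      exact meritAt_congr _ T (q ++ [true]) (q ++ [true, true])
        (by rw [subtreeAt_replaceAt T q _ _ hsub, subtreeAt_append, hsub]; rfl) s hs
    · intro s hs
      exact meritAt_congr _ T (q ++ [false, true]) (q ++ [true, false])
        (by rw [subtreeAt_replaceAt T q _ _ hsub, subtreeAt_append, hsub]; rfl) s hs
    · intro s hs
      exact meritAt_congr _ T (q ++ [false, false]) (q ++ [false])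
        (by rw [subtreeAt_replaceAt T q _ _ hsub, subtreeAt_append, hsub]; rfl) s hs
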